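/- Let $L>0$, $d\ge 2$, and let $r\colon[0,L]\to\mathbb{R}^d$ be continuously differentiable with $|r'(s)|=1$ for all $s\in[0,L]$. Let $w\colon\mathbb{R}^d\to\mathbb{R}$ be such that the composition $v=w\circ r$ is continuous on $[0,L]$, differentiable at every point of $[0,L]$ with derivative $v'$, and $v'$ is square-integrable and interval-integrable on $[0,L]$. Set $w_0=\min_{[0,L]}v$, $w_1=\max_{[0,L]}v$, and $\tilde I=\{\,s\in[0,L]\mid w_0<v(s)<w_1\,\}$. Then $\int_{\tilde I}\big(w(r(s))-w_0\big)^2\,ds\le|\tilde I|^2\int_{\tilde I}\big|v'(s)\big|^2\,ds$, where $|\tilde I|$ denotes the Lebesgue measure of $\tilde I$. -/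

import Mathlib

open MeasureTheory Set

/-- Poincaré-type inequality on a simple C¹-curve parametrized by arc length. -/
theorem poincare_type_curve (L : ℝ) (hL : 0 < L) (d : ℕ) (hd : 2 ≤ d)
    (r r' : ℝ → EuclideanSpace ℝ (Fin d))
    (hr : ∀ s ∈ Icc (0 : ℝ) L, HasDerivAt r (r' s) s)
    (hr' : ContinuousOn r' (Icc (0 : ℝ) L))
    (hunit : ∀ s ∈ Icc (0 : ℝ) L, ‖r' s‖ = 1)
    (w : EuclideanSpace ℝ (Fin d) → ℝ)
    (v v' : ℝ → ℝ) (hv : ∀ s, v s = w (r s))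
    (hcont : ContinuousOn v (Icc (0 : ℝ) L))
    (hderiv : ∀ s ∈ Icc (0 : ℝ) L, HasDerivAt v (v' s) s)
    (hsq : IntegrableOn (fun s => (v' s) ^ 2) (Icc (0 : ℝ) L) volume)
    (hint : IntervalIntegrable v' volume 0 L)
    (w0 w1 : ℝ)
    (hw0 : w0 = sInf (v '' Icc (0 : ℝ) L)) (hw1 : w1 = sSup (v '' Icc (0 : ℝ) L))
    (I : Set ℝ) (hI : I = {s ∈ Icc (0 : ℝ) L | w0 < v s ∧ v s < w1}) :
    ∫ s in I, (w (r s) - w0) ^ 2 ≤ (volume I).toReal ^ 2 * ∫ s in I, |v' s| ^ 2 := by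
  have hK : IsCompact (Icc (0:ℝ) L) := isCompact_Icc
  have hKne : (Icc (0:ℝ) L).Nonempty := nonempty_Icc.2 hL.le
  obtain ⟨s₀, hs₀K, hs₀, hmin⟩ := hK.exists_sInf_image_eq_and_le hKne hcont
  obtain ⟨s₁, hs₁K, hs₁, hmax⟩ := hK.exists_sSup_image_eq_and_ge hKne hcont
  have hw0' : w0 = v s₀ := hw0.trans hs₀
  have hw1' : w1 = v s₁ := hw1.trans hs₁
  have hw0le : ∀ s ∈ Icc (0:ℝ) L, w0 ≤ v s := fun s hs => hw0' ▸ hmin s hs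
  have hw1ge : ∀ s ∈ Icc (0:ℝ) L, v s ≤ w1 := fun s hs => hw1' ▸ hmax s hs
  have hIsub : I ⊆ Icc (0:ℝ) L := by rw [hI]; exact fun s hs => hs.1
  -- measurability of I
  have hIopen : IsOpen (Ioo (0:ℝ) L ∩ v ⁻¹' Ioo w0 w1) :=
    (hcont.mono Ioo_subset_Icc_self).isOpen_inter_preimage isOpen_Ioo isOpen_Ioo
  have hIeq : I = (Ioo (0:ℝ) L ∩ v ⁻¹' Ioo w0 w1) ∪ (I ∩ {0, L}) := by
    ext s
    simp only [hI, mem_union, mem_inter_iff, mem_preimage, mem_Ioo, mem_Icc, mem_sep_iff,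
      mem_insert_iff, mem_singleton_iff]
    constructor
    · rintro ⟨⟨h0, hL'⟩, h1, h2⟩
      rcases eq_or_lt_of_le h0 with h0' | h0'
      · exact Or.inr ⟨⟨⟨h0, hL'⟩, h1, h2⟩, Or.inl h0'.symm⟩
      rcases eq_or_lt_of_le hL' with hL'' | hL''
      · exact Or.inr ⟨⟨⟨h0, hL'⟩, h1, h2⟩, Or.inr hL''⟩
      · exact Or.inl ⟨⟨h0', hL''⟩, h1, h2⟩
    · rintro (⟨⟨h0, hL'⟩, h1, h2⟩ | ⟨hs, -⟩)
      · exact ⟨⟨h0.le, hL'.le⟩, h1, h2⟩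
      · exact hs
  have hImeas : MeasurableSet I := by
    rw [hIeq]
    exact hIopen.measurableSet.union
      (((Set.finite_singleton L).insert 0).subset inter_subset_right).measurableSet
  have hIfin : volume I < ⊤ := lt_of_le_of_lt (measure_mono hIsub) measure_Icc_lt_top
  -- the derivative vanishes on the interior part of the complement of I
  have hzero : ∀ s, s ∈ Icc (0:ℝ) L \ I → s ∈ Ioo (0:ℝ) L → v' s = 0 := by
    rintro s ⟨hsK, hsI⟩ hsO
    rw [hI] at hsI
    have hsI' : ¬ (w0 < v s ∧ v s < w1) := fun h => hsI ⟨hsK, h⟩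
    rcases not_and_or.1 hsI' with h | h
    · have hle : v s ≤ w0 := not_lt.1 h
      have hloc : IsLocalMin v s := by
        filter_upwards [Icc_mem_nhds hsO.1 hsO.2] with t ht
        exact le_trans hle (hw0le t ht)
      exact hloc.hasDerivAt_eq_zero (hderiv s hsK)
    · have hge : w1 ≤ v s := not_lt.1 h
      have hloc : IsLocalMax v s := by
        filter_upwards [Icc_mem_nhds hsO.1 hsO.2] with t ht
        exact le_trans (hw1ge t ht) hge
      exact hloc.hasDerivAt_eq_zero (hderiv s hsK)
  -- integrability of |v'| on [0, L]
  have hv'int : IntegrableOn v' (Icc (0:ℝ) L) volume := by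
    rw [integrableOn_Icc_iff_integrableOn_Ioc]
    exact (intervalIntegrable_iff_integrableOn_Ioc_of_le hL.le).1 hint
  have habs : IntegrableOn (fun s => |v' s|) (Icc (0:ℝ) L) volume := hv'int.abs
  have hdiffmeas : MeasurableSet (Icc (0:ℝ) L \ I) := measurableSet_Icc.diff hImeas
  -- the integral of |v'| over the complement of I vanishes
  have hzero_ae : (fun s => |v' s|) =ᵐ[volume.restrict (Icc (0:ℝ) L \ I)] 0 := by
    rw [Filter.EventuallyEq, ae_restrict_iff' hdiffmeas]
    have hsub : {s : ℝ | ¬ (s ∈ Icc (0:ℝ) L \ I → |v' s| = (0 : ℝ → ℝ) s)} ⊆ {0, L} := by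
      intro s hs
      simp only [mem_setOf_eq, Classical.not_imp] at hs
      by_contra hne
      simp only [mem_insert_iff, mem_singleton_iff, not_or] at hne
      have hsO : s ∈ Ioo (0:ℝ) L :=
        ⟨lt_of_le_of_ne hs.1.1.1 (Ne.symm hne.1), lt_of_le_of_ne hs.1.1.2 hne.2⟩
      exact hs.2 (by rw [hzero s hs.1 hsO]; exact abs_zero)
    exact ae_iff.2 (measure_mono_null hsub
      (((Set.finite_singleton L).insert 0).countable.measure_zero _))
  have h0 : ∫ s in Icc (0:ℝ) L \ I, |v' s| = 0 := integral_eq_zero_of_ae hzero_ae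
  have hsplit : ∫ s in Icc (0:ℝ) L, |v' s| = ∫ s in I, |v' s| := by
    calc ∫ s in Icc (0:ℝ) L, |v' s| = ∫ s in I ∪ (Icc (0:ℝ) L \ I), |v' s| := by
          rw [union_diff_cancel hIsub]
      _ = (∫ s in I, |v' s|) + ∫ s in Icc (0:ℝ) L \ I, |v' s| :=
          setIntegral_union disjoint_sdiff_self_right hdiffmeas (habs.mono_set hIsub)
            (habs.mono_set diff_subset)
      _ = ∫ s in I, |v' s| := by rw [h0, add_zero]
  -- pointwise bound via FTC
  have hbound : ∀ s ∈ Icc (0:ℝ) L, v s - w0 ≤ ∫ t in I, |v' t| := by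
    intro s hs
    have hsub' : uIcc s₀ s ⊆ Icc (0:ℝ) L := uIcc_subset_Icc hs₀K hs
    have hii : IntervalIntegrable v' volume s₀ s :=
      hint.mono_set (by rw [uIcc_of_le hL.le]; exact hsub')
    have hftc : ∫ t in s₀..s, v' t = v s - v s₀ :=
      intervalIntegral.integral_eq_sub_of_hasDerivAt (fun t ht => hderiv t (hsub' ht)) hii
    calc v s - w0 = ∫ t in s₀..s, v' t := by rw [hw0', ← hftc]
      _ ≤ |∫ t in s₀..s, v' t| := le_abs_self _
      _ ≤ ∫ t in Set.uIoc s₀ s, |v' t| := by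
          simpa [Real.norm_eq_abs] using
            intervalIntegral.norm_integral_le_integral_norm_uIoc (f := v') (a := s₀) (b := s)
      _ ≤ ∫ t in Icc (0:ℝ) L, |v' t| :=
          setIntegral_mono_set habs (ae_of_all _ fun t => abs_nonneg _)
            (HasSubset.Subset.eventuallyLE (fun t ht => hsub' (uIoc_subset_uIcc ht)))
      _ = ∫ t in I, |v' t| := hsplit
  -- Cauchy–Schwarz
  haveI : Fact (volume I < ⊤) := ⟨hIfin⟩
  have haesm : AEStronglyMeasurable (fun t => |v' t|) (volume.restrict I) :=
    ((hv'int.aestronglyMeasurable.mono_measure (Measure.restrict_mono hIsub le_rfl))).norm.congr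
      (ae_of_all _ fun t => (Real.norm_eq_abs (v' t)))
  have hsqI : IntegrableOn (fun t => |v' t| ^ 2) I volume := by
    have := hsq.mono_set hIsub
    simpa [sq_abs] using this
  have hmem2 : MemLp (fun t => |v' t|) (ENNReal.ofReal 2) (volume.restrict I) := by
    rw [show ENNReal.ofReal 2 = 2 by norm_num]
    exact (memLp_two_iff_integrable_sq haesm).2 hsqI
  have hmem1 : MemLp (fun _ : ℝ => (1:ℝ)) (ENNReal.ofReal 2) (volume.restrict I) := memLp_const 1
  have hconj : Real.HolderConjugate 2 2 := Real.holderConjugate_iff.mpr ⟨one_lt_two, by norm_num⟩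
  have hCS := integral_mul_le_Lp_mul_Lq_of_nonneg hconj (μ := volume.restrict I)
    (ae_of_all _ fun _ => zero_le_one) (ae_of_all _ fun t => abs_nonneg (v' t)) hmem1 hmem2
  simp only [one_mul, Real.one_rpow] at hCS
  have habs_rpow : ∀ t : ℝ, |v' t| ^ (2:ℝ) = |v' t| ^ (2:ℕ) := fun t => by
    rw [show ((2:ℝ)) = ((2:ℕ) : ℝ) by norm_num, Real.rpow_natCast]
  rw [show (∫ (_ : ℝ) in I, (1:ℝ)) = (volume I).toReal by simp [Measure.real]] at hCS
  simp only [habs_rpow] at hCS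
  have hC : (0:ℝ) ≤ ∫ t in I, |v' t| ^ 2 := integral_nonneg fun t => sq_nonneg _
  have hB : (0:ℝ) ≤ (volume I).toReal := ENNReal.toReal_nonneg
  have hM2 : (∫ t in I, |v' t|) ^ 2 ≤ (volume I).toReal * ∫ t in I, |v' t| ^ 2 := by
    calc (∫ t in I, |v' t|) ^ 2
        ≤ ((volume I).toReal ^ (1/2:ℝ) * (∫ t in I, |v' t| ^ 2) ^ (1/2:ℝ)) ^ 2 :=
          pow_le_pow_left₀ (integral_nonneg fun t => abs_nonneg _) hCS 2
      _ = (volume I).toReal * ∫ t in I, |v' t| ^ 2 := by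
          rw [mul_pow, ← Real.rpow_natCast ((volume I).toReal ^ (1/2:ℝ)) 2,
            ← Real.rpow_natCast ((∫ t in I, |v' t| ^ 2) ^ (1/2:ℝ)) 2,
            ← Real.rpow_mul hB, ← Real.rpow_mul hC]
          norm_num
  -- assemble
  have hfIint : IntegrableOn (fun s => (v s - w0) ^ 2) I volume :=
    (((hcont.sub continuousOn_const).pow 2).integrableOn_compact hK).mono_set hIsub
  have hgoal1 : ∫ s in I, (w (r s) - w0) ^ 2 = ∫ s in I, (v s - w0) ^ 2 := by
    simp only [← hv]
  rw [hgoal1]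
  calc ∫ s in I, (v s - w0) ^ 2
      ≤ ∫ _ in I, ((volume I).toReal * ∫ t in I, |v' t| ^ 2) := by
        refine setIntegral_mono_on hfIint (integrableOn_const hIfin.ne) hImeas
          fun s hs => ?_
        have h1 : (v s - w0) ^ 2 ≤ (∫ t in I, |v' t|) ^ 2 :=
          pow_le_pow_left₀ (sub_nonneg.2 (hw0le s (hIsub hs))) (hbound s (hIsub hs)) 2
        exact h1.trans hM2
    _ = (volume I).toReal * ((volume I).toReal * ∫ t in I, |v' t| ^ 2) := by
        rw [setIntegral_const, smul_eq_mul, Measure.real]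
    _ = (volume I).toReal ^ 2 * ∫ t in I, |v' t| ^ 2 := by ring
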